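/- Define the mixture distribution G(v) = (1−λ)·F(v) + λ·F(v)^J, with density g(v) = ((1−λ) + λ·J·F(v)^{J−1})·f(v). For every v ∈ (0,1) with 0 < F(v) < 1, the inverse hazard rate of G strictly exceeds that of F: (1 − G(v))/g(v) > (1 − F(v))/f(v); equivalently, (1 − (1−λ)·F(v) − λ·F(v)^J)·f(v) > (1 − F(v))·((1−λ) + λ·J·F(v)^{J−1})·f(v). (The likelihood ratio of G with respect to F is monotone increasing, so the mixture of loyal and on-platform consumer values has a larger inverse hazard rate than F.) -/
import Mathlib


open intervalIntegral

lemma key_geom (u : ℝ) (hu0 : 0 < u) (hu1 : u < 1) (J : ℕ) (hJ : 2 ≤ J) :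
    (J : ℝ) * u ^ (J - 1) * (1 - u) < 1 - u ^ J := by
  have h1u : (0:ℝ) < 1 - u := by linarith
  have hgeom : 1 - u ^ J = (1 - u) * ∑ i ∈ Finset.range J, u ^ i := by
    have := geom_sum_mul u J
    ring_nf
    ring_nf at this
    linarith
  have hsum : (J : ℝ) * u ^ (J - 1) < ∑ i ∈ Finset.range J, u ^ i := by
    have : ∑ i ∈ Finset.range J, u ^ (J - 1) < ∑ i ∈ Finset.range J, u ^ i := by
      apply Finset.sum_lt_sum
      · intro i hi
        exact pow_le_pow_of_le_one hu0.le hu1.le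
          (Nat.le_sub_one_of_lt (Finset.mem_range.mp hi))
      · refine ⟨0, Finset.mem_range.mpr (by omega), ?_⟩
        simp only [pow_zero]
        exact pow_lt_one₀ hu0.le hu1 (by omega)
    simpa using this
  rw [hgeom]
  calc (J : ℝ) * u ^ (J - 1) * (1 - u) = (1 - u) * ((J:ℝ) * u ^ (J-1)) := by ring
  _ < (1 - u) * ∑ i ∈ Finset.range J, u ^ i := by
      exact mul_lt_mul_of_pos_left hsum h1u

/-- The mixture distribution G = (1−λ)F + λF^J has a strictly
larger inverse hazard rate than F at every interior point. -/
theorem mixture_inverse_hazard_rate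
    (f F : ℝ → ℝ)
    (hf_cont : ContinuousOn f (Set.Icc 0 1))
    (hf_pos : ∀ x ∈ Set.Icc (0:ℝ) 1, 0 < f x)
    (hf_logconcave : ConcaveOn ℝ (Set.Icc 0 1) (Real.log ∘ f))
    (hf_int : (∫ t in (0:ℝ)..1, f t) = 1)
    (hF : ∀ x, F x = ∫ t in (0:ℝ)..x, f t)
    (J : ℕ) (hJ : 2 ≤ J)
    (lam : ℝ) (hlam : lam ∈ Set.Ioo (0:ℝ) 1)
    (v : ℝ) (hv : v ∈ Set.Ioo (0:ℝ) 1) (hFv : 0 < F v) (hFv1 : F v < 1) :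
    (1 - ((1 - lam) * F v + lam * F v ^ J))
        / (((1 - lam) + lam * (J : ℝ) * F v ^ (J - 1)) * f v)
      > (1 - F v) / f v
    ∧ (1 - (1 - lam) * F v - lam * F v ^ J) * f v
      > (1 - F v) * (((1 - lam) + lam * (J : ℝ) * F v ^ (J - 1)) * f v) := by
  obtain ⟨hl0, hl1⟩ := hlam
  set u := F v with hu
  have hfv : 0 < f v := hf_pos v ⟨hv.1.le, hv.2.le⟩
  have hkey := key_geom u hFv hFv1 J hJ
  have hmain : 1 - (1 - lam) * u - lam * u ^ J
      > (1 - u) * ((1 - lam) + lam * (J : ℝ) * u ^ (J - 1)) := by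
    nlinarith [hkey, hl0, hFv, hFv1]
  have hden : 0 < (1 - lam) + lam * (J : ℝ) * u ^ (J - 1) := by
    have : 0 < lam * (J : ℝ) * u ^ (J - 1) := by positivity
    linarith
  constructor
  · rw [gt_iff_lt, div_lt_div_iff₀ hfv (by positivity)]
    nlinarith [hmain, hfv]
  · nlinarith [hmain, hfv]
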